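/- As γ̄ → ∞, the Lemma 2 average error probability decays polynomially with diversity order m: (1/2) I_{m/(m+αγ̄)}(m, 1/2) ~ (1/(2m B(m,1/2))) · (m/(αγ̄))^m, i.e., the ratio of the two sides tends to 1. -/

import Mathlib

open MeasureTheory Real Set Filter

noncomputable def incBeta (x a b : ℝ) : ℝ :=
  ∫ t in (0:ℝ)..x, t ^ (a - 1) * (1 - t) ^ (b - 1)

noncomputable def regIncBeta (x a b : ℝ) : ℝ := incBeta x a b / incBeta 1 a b

lemma aux_cont_on (p c : ℝ) (hc : c < 1) :
    ContinuousOn (fun t : ℝ => (1 - t) ^ p) (uIcc 0 c) := by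
  apply ContinuousOn.rpow_const (by fun_prop)
  intro t ht
  left
  have h1 : t ≤ max 0 c := ht.2
  have : t < 1 := lt_of_le_of_lt h1 (by simp [hc])
  nlinarith

lemma aux_integrable_left (p q c : ℝ) (hp : -1 < p) (hc : c < 1) :
    IntervalIntegrable (fun t : ℝ => t ^ p * (1 - t) ^ q) volume 0 c :=
  (intervalIntegral.intervalIntegrable_rpow' hp).mul_continuousOn (aux_cont_on q c hc)

lemma aux_integrable_full (p q : ℝ) (hp : -1 < p) (hq : -1 < q) :
    IntervalIntegrable (fun t : ℝ => t ^ p * (1 - t) ^ q) volume 0 1 := by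
  refine (aux_integrable_left p q (1/2) hp (by norm_num)).trans ?_
  have h := (aux_integrable_left q p (1/2) hq (by norm_num)).comp_sub_left 1
  norm_num at h
  have he : (fun t : ℝ => t ^ p * (1 - t) ^ q)
      = fun t : ℝ => (1 - t) ^ q * t ^ p := by
    funext t; ring
  rw [he]
  exact h.symm

lemma aux_B_pos (m : ℝ) (hm : 0 < m) :
    0 < ∫ t in (0:ℝ)..1, t ^ (m - 1) * (1 - t) ^ ((1:ℝ)/2 - 1) := by
  apply intervalIntegral.intervalIntegral_pos_of_pos_on
    (aux_integrable_full _ _ (by linarith) (by norm_num))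
  · intro t ht
    have h1 : 0 < t := ht.1
    have h2 : 0 < 1 - t := by linarith [ht.2]
    positivity
  · norm_num

theorem aber_asymptotic_diversity_order (m α : ℝ) (hm : 0 < m) (hα : 0 < α) :
    Filter.Tendsto
      (fun γbar : ℝ =>
        ((1 / 2) * regIncBeta (m / (m + α * γbar)) m (1 / 2)) /
          ((1 / (2 * m * incBeta 1 m (1 / 2))) * (m / (α * γbar)) ^ m))
      Filter.atTop (nhds 1) := by
  have hB : 0 < incBeta 1 m (1/2) := by
    have := aux_B_pos m hm
    simpa [incBeta] using this
  have hx_tend : Tendsto (fun γ : ℝ => m / (m + α * γ)) atTop (nhds 0) := by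
    apply Tendsto.div_atTop tendsto_const_nhds
    exact tendsto_atTop_add_const_left _ m (Tendsto.const_mul_atTop hα tendsto_id)
  have h1x_tend : Tendsto (fun γ : ℝ => 1 - m / (m + α * γ)) atTop (nhds 1) := by
    have := (tendsto_const_nhds (x := (1:ℝ)) (f := atTop)).sub hx_tend
    simpa using this
  have hL : Tendsto (fun γ : ℝ => (1 - m / (m + α * γ)) ^ m) atTop (nhds 1) := by
    have := h1x_tend.rpow_const (p := m) (Or.inl one_ne_zero)
    simpa using this
  have hH : Tendsto (fun γ : ℝ => (1 - m / (m + α * γ)) ^ (m + (1/2 - 1))) atTop (nhds 1) := by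
    have := h1x_tend.rpow_const (p := m + (1/2 - 1)) (Or.inl one_ne_zero)
    simpa using this
  have key : ∀ᶠ γ : ℝ in atTop,
      (1 - m / (m + α * γ)) ^ m ≤
        ((1 / 2) * regIncBeta (m / (m + α * γ)) m (1 / 2)) /
          ((1 / (2 * m * incBeta 1 m (1 / 2))) * (m / (α * γ)) ^ m) ∧
      ((1 / 2) * regIncBeta (m / (m + α * γ)) m (1 / 2)) /
          ((1 / (2 * m * incBeta 1 m (1 / 2))) * (m / (α * γ)) ^ m) ≤
        (1 - m / (m + α * γ)) ^ (m + (1/2 - 1)) := by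
    filter_upwards [eventually_gt_atTop (0:ℝ)] with γ hγ
    have hg : 0 < α * γ := mul_pos hα hγ
    have hden : 0 < m + α * γ := by linarith
    set x : ℝ := m / (m + α * γ) with hxdef
    have hx0 : 0 < x := div_pos hm hden
    have hx1 : x < 1 := (div_lt_one hden).2 (by linarith)
    have h1x : 0 < 1 - x := by linarith
    set B : ℝ := incBeta 1 m (1/2) with hBdef
    set I : ℝ := incBeta x m (1/2) with hIdef
    set P : ℝ := (m / (α * γ)) ^ m with hPdef
    have hP : 0 < P := rpow_pos_of_pos (div_pos hm hg) m
    -- value of the pure power integral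
    have hval : ∫ t in (0:ℝ)..x, t ^ (m - 1) = x ^ m / m := by
      rw [integral_rpow (Or.inl (by linarith))]
      rw [sub_add_cancel, Real.zero_rpow hm.ne']
      ring
    -- lower bound on I
    have hlow : x ^ m / m ≤ I := by
      rw [← hval, hIdef, incBeta]
      apply intervalIntegral.integral_mono_on hx0.le
        (intervalIntegral.intervalIntegrable_rpow' (by linarith))
        (aux_integrable_left _ _ _ (by linarith) hx1)
      intro t ht
      have h1t : 0 < 1 - t := by
        have := ht.2; linarith
      exact le_mul_of_one_le_right (rpow_nonneg ht.1 _)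
        (one_le_rpow_of_pos_of_le_one_of_nonpos h1t (by linarith [ht.1]) (by norm_num))
    -- upper bound on I
    have hupp : I ≤ x ^ m / m * (1 - x) ^ ((1:ℝ)/2 - 1) := by
      have hval2 : ∫ t in (0:ℝ)..x, t ^ (m - 1) * (1 - x) ^ ((1:ℝ)/2 - 1)
          = x ^ m / m * (1 - x) ^ ((1:ℝ)/2 - 1) := by
        rw [intervalIntegral.integral_mul_const, hval]
      rw [← hval2, hIdef, incBeta]
      apply intervalIntegral.integral_mono_on hx0.le
        (aux_integrable_left _ _ _ (by linarith) hx1)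
        ((intervalIntegral.intervalIntegrable_rpow' (by linarith)).mul_const _)
      intro t ht
      apply mul_le_mul_of_nonneg_left _ (rpow_nonneg ht.1 _)
      exact rpow_le_rpow_of_nonpos h1x (by linarith [ht.2]) (by norm_num)
    -- the expression equals m * I / P
    have hE : ((1 / 2) * regIncBeta x m (1 / 2)) / ((1 / (2 * m * B)) * P)
        = m * I / P := by
      rw [regIncBeta, ← hIdef, ← hBdef]
      field_simp
    -- x ^ m = (1 - x) ^ m * P
    have hxP : x ^ m = (1 - x) ^ m * P := by
      have hx_eq : x = (1 - x) * (m / (α * γ)) := by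
        have h1xe : 1 - x = α * γ / (m + α * γ) := by
          rw [hxdef]; field_simp; ring
        rw [h1xe, hxdef]
        field_simp
      have h2 := Real.mul_rpow (z := m) h1x.le (div_pos hm hg).le
      rw [← hx_eq] at h2
      rw [hPdef]; exact h2
    constructor
    · rw [hE, le_div_iff₀ hP]
      have hxm : x ^ m ≤ m * I := by
        rw [div_le_iff₀ hm] at hlow
        linarith
      calc (1 - x) ^ m * P = x ^ m := hxP.symm
        _ ≤ m * I := hxm
    · rw [hE]
      have hexp : (1 - x) ^ (m + (1/2 - 1)) = (1 - x) ^ m * (1 - x) ^ ((1:ℝ)/2 - 1) :=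
        Real.rpow_add h1x m (1/2 - 1)
      rw [div_le_iff₀ hP, hexp]
      have : m * I ≤ x ^ m * (1 - x) ^ ((1:ℝ)/2 - 1) := by
        have := mul_le_mul_of_nonneg_left hupp hm.le
        calc m * I ≤ m * (x ^ m / m * (1 - x) ^ ((1:ℝ)/2 - 1)) := this
          _ = x ^ m * (1 - x) ^ ((1:ℝ)/2 - 1) := by field_simp
      calc m * I ≤ x ^ m * (1 - x) ^ ((1:ℝ)/2 - 1) := this
        _ = (1 - x) ^ m * (1 - x) ^ ((1:ℝ)/2 - 1) * P := by rw [hxP]; ring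
  exact tendsto_of_tendsto_of_tendsto_of_le_of_le' hL hH
    (key.mono fun γ h => h.1) (key.mono fun γ h => h.2)
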